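/- Let n ≥ 1, let k_1 < k_2 < … < k_n be strictly positive real numbers, and let f(u) := (−1)^{n+1} · u · ∏_{i=1}^n (1 − u/k_i). Let I ⊆ ℝ be an open interval containing 0 and let y : I → ℝ be differentiable with y′(t) = f(y(t)) for all t ∈ I and y(0) ∈ [0, k_n]. Then y(t) ∈ [0, k_n] for all t ∈ I. -/

import Mathlib

open Finset

open Set Metric in
lemma equilibrium_stays (f : ℝ → ℝ) (hcf : ContDiff ℝ 1 f) (c : ℝ) (hfc : f c = 0)
    (I : Set ℝ) (hIopen : IsOpen I) (hIconn : I.OrdConnected)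
    (y : ℝ → ℝ) (hy : ∀ t ∈ I, HasDerivAt y (f (y t)) t)
    (t0 t1 : ℝ) (ht0 : t0 ∈ I) (ht1 : t1 ∈ I) (h : y t0 = c) : y t1 = c := by
  obtain ⟨ε0, hε0, hb0⟩ := Metric.isOpen_iff.mp hIopen t0 ht0
  obtain ⟨ε1, hε1, hb1⟩ := Metric.isOpen_iff.mp hIopen t1 ht1
  set ε := min ε0 ε1 with hεdef
  set m := min t0 t1 with hm
  set M := max t0 t1 with hM
  set a := m - ε/2 with ha
  set b := M + ε/2 with hb
  have hεpos : 0 < ε := lt_min hε0 hε1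
  have hεa : ε ≤ ε0 := min_le_left _ _
  have hεb : ε ≤ ε1 := min_le_right _ _
  have hm1 : m ≤ t0 := min_le_left _ _
  have hm2 : m ≤ t1 := min_le_right _ _
  have hM1 : t0 ≤ M := le_max_left _ _
  have hM2 : t1 ≤ M := le_max_right _ _
  have hmc : m = t0 ∨ m = t1 := min_choice t0 t1
  have hMc : M = t0 ∨ M = t1 := max_choice t0 t1
  clear_value ε m M a b
  have hIcc : Set.Icc a b ⊆ I := by
    intro u hu
    obtain ⟨hua, hub⟩ := Set.mem_Icc.mp hu
    rcases lt_or_ge u m with h1 | h1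
    · have hd : dist u m < ε := by
        rw [Real.dist_eq, abs_lt]
        constructor <;> linarith
      rcases hmc with he | he
      · exact hb0 (Metric.mem_ball.mpr (by rw [← he]; exact hd.trans_le hεa))
      · exact hb1 (Metric.mem_ball.mpr (by rw [← he]; exact hd.trans_le hεb))
    · rcases le_or_gt u M with h2 | h2
      · have hmem : Set.Icc m M ⊆ I := by
          rcases hmc with he | he <;> rcases hMc with he' | he' <;> rw [he, he'] <;> first
            | exact hIconn.out ht0 ht0 | exact hIconn.out ht0 ht1
            | exact hIconn.out ht1 ht0 | exact hIconn.out ht1 ht1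
        exact hmem ⟨h1, h2⟩
      · have hd : dist u M < ε := by
          rw [Real.dist_eq, abs_lt]
          constructor <;> linarith
        rcases hMc with he | he
        · exact hb0 (Metric.mem_ball.mpr (by rw [← he]; exact hd.trans_le hεa))
        · exact hb1 (Metric.mem_ball.mpr (by rw [← he]; exact hd.trans_le hεb))
  have ht0' : t0 ∈ Set.Ioo a b := ⟨by linarith, by linarith⟩
  have ht1' : t1 ∈ Set.Ioo a b := ⟨by linarith, by linarith⟩
  have hycont : ContinuousOn y (Set.Icc a b) := fun u hu =>
    ((hy u (hIcc hu)).continuousAt).continuousWithinAt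
  obtain ⟨C, hC⟩ := isCompact_Icc.exists_bound_of_continuousOn hycont
  set R := max C |c| with hR
  obtain ⟨L, hL⟩ := (isCompact_closedBall (0:ℝ) R).exists_bound_of_continuousOn
    ((hcf.continuous_deriv le_rfl).continuousOn (s := Metric.closedBall 0 R))
  have hlip : LipschitzOnWith L.toNNReal f (Metric.closedBall (0:ℝ) R) := by
    apply (convex_closedBall (0:ℝ) R).lipschitzOnWith_of_nnnorm_hasDerivWithin_le
      (f' := deriv f)
      (fun x _ => ((hcf.differentiable one_ne_zero) x).hasDerivAt.hasDerivWithinAt)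
    intro x hx
    rw [← NNReal.coe_le_coe, coe_nnnorm, Real.coe_toNNReal']
    exact (hL x hx).trans (le_max_left _ _)
  have key : Set.EqOn y (fun _ => c) (Set.Ioo a b) := by
    apply ODE_solution_unique_of_mem_Ioo (v := fun _ => f)
      (s := fun _ => Metric.closedBall (0:ℝ) R) (fun _ _ => hlip) ht0'
    · intro t htab
      refine ⟨hy t (hIcc (Set.Ioo_subset_Icc_self htab)), ?_⟩
      rw [Metric.mem_closedBall, Real.dist_0_eq_abs, ← Real.norm_eq_abs]
      exact (hC t (Set.Ioo_subset_Icc_self htab)).trans (le_max_left _ _)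
    · intro t _
      refine ⟨hfc ▸ hasDerivAt_const t c, ?_⟩
      rw [Metric.mem_closedBall, Real.dist_0_eq_abs]
      exact le_max_right _ _
    · exact h
  exact key ht1'

theorem invariance_of_Icc (n : ℕ) (hn : 1 ≤ n) (k : Fin n → ℝ)
    (hk : ∀ i, 0 < k i) (hmono : StrictMono k)
    (f : ℝ → ℝ) (hf : ∀ u, f u = (-1 : ℝ) ^ (n + 1) * u * ∏ i, (1 - u / k i))
    (I : Set ℝ) (hIopen : IsOpen I) (hIconn : I.OrdConnected) (h0 : (0 : ℝ) ∈ I)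
    (y : ℝ → ℝ) (hy : ∀ t ∈ I, HasDerivAt y (f (y t)) t)
    (hy0 : y 0 ∈ Set.Icc 0 (k ⟨n - 1, by omega⟩)) :
    ∀ t ∈ I, y t ∈ Set.Icc 0 (k ⟨n - 1, by omega⟩) := by
  set c1 := k ⟨n - 1, by omega⟩ with hc1
  have hc1pos : 0 < c1 := hk _
  have hcf : ContDiff ℝ 1 f := by
    have hfe : f = fun u => (-1 : ℝ) ^ (n + 1) * u * ∏ i, (1 - u / k i) := funext hf
    rw [hfe]
    refine (contDiff_const.mul contDiff_id).mul ?_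
    exact contDiff_iff_contDiffAt.mpr fun x =>
      contDiffAt_prod fun i _ => contDiffAt_const.sub (contDiffAt_id.div_const _)
  have hf0 : f 0 = 0 := by rw [hf]; ring
  have hfc1 : f c1 = 0 := by
    rw [hf]
    have hz : (1 - c1 / k ⟨n - 1, by omega⟩) = 0 := by
      rw [← hc1, div_self hc1pos.ne']; ring
    rw [Finset.prod_eq_zero (Finset.mem_univ ⟨n - 1, by omega⟩) hz, mul_zero]
  intro t ht
  have hIuIcc : Set.uIcc 0 t ⊆ I := hIconn.uIcc_subset h0 ht
  have hycont : ContinuousOn y (Set.uIcc 0 t) := fun u hu =>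
    ((hy u (hIuIcc hu)).continuousAt).continuousWithinAt
  constructor
  · by_contra hlt
    push_neg at hlt
    have h0mem : (0:ℝ) ∈ Set.uIcc (y 0) (y t) :=
      Set.mem_uIcc.mpr (Or.inr ⟨hlt.le, hy0.1⟩)
    obtain ⟨s, hs, hys⟩ := intermediate_value_uIcc hycont h0mem
    have := equilibrium_stays f hcf 0 hf0 I hIopen hIconn y hy s t (hIuIcc hs) ht hys
    linarith
  · by_contra hlt
    push_neg at hlt
    have h0mem : c1 ∈ Set.uIcc (y 0) (y t) :=
      Set.mem_uIcc.mpr (Or.inl ⟨hy0.2, hlt.le⟩)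
    obtain ⟨s, hs, hys⟩ := intermediate_value_uIcc hycont h0mem
    have := equilibrium_stays f hcf c1 hfc1 I hIopen hIconn y hy s t (hIuIcc hs) ht hys
    linarith
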